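/- Let H be a complex Hilbert space, Q ⊆ ℂⁿ a complete circular domain centered at 0, and suppose f : Q → 𝓑(H) has a homogeneous polynomial expansion f(z) = ∑_{k=0}^∞ P_k(z) converging at every z ∈ Q, with ‖f(z)‖ < 1 for all z ∈ Q and f(0) = a₀·I for some a₀ ∈ ℂ with |a₀| < 1; assume also that ∑_{k=1}^∞ k‖P_k(z)‖² converges at every z ∈ Q. Then for every w ∈ Q and every r ∈ [0,1/3], the point z = r·w satisfies ∑_{k=0}^∞ ‖P_k(z)‖ + (8/9)·∑_{k=1}^∞ k‖P_k(z)‖² ≤ 1. -/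

import Mathlib

set_option maxHeartbeats 1000000

open Metric

private lemma inner_key {H : Type*} [NormedAddCommGroup H] [InnerProductSpace ℂ H]
    (T : H →L[ℂ] H) (a : ℂ) (y : H) :
    ‖T y - a • y‖ ^ 2 + (1 - ‖a‖ ^ 2) * (‖y‖ ^ 2 - ‖T y‖ ^ 2)
      = ‖y - (starRingEnd ℂ a) • T y‖ ^ 2 := by
  have e1 : ‖T y - a • y‖ ^ 2
      = ‖T y‖ ^ 2 - 2 * RCLike.re (a * (inner ℂ (T y) y : ℂ)) + ‖a‖ ^ 2 * ‖y‖ ^ 2 := by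
    rw [norm_sub_sq (𝕜 := ℂ), inner_smul_right, norm_smul]
    ring
  have e2 : ‖y - (starRingEnd ℂ a) • T y‖ ^ 2
      = ‖y‖ ^ 2 - 2 * RCLike.re ((starRingEnd ℂ a) * (inner ℂ y (T y) : ℂ))
        + ‖a‖ ^ 2 * ‖T y‖ ^ 2 := by
    rw [norm_sub_sq (𝕜 := ℂ), inner_smul_right, norm_smul]
    have : ‖(starRingEnd ℂ) a‖ = ‖a‖ := RCLike.norm_conj a
    rw [this]; ring
  have e3 : RCLike.re ((starRingEnd ℂ a) * (inner ℂ y (T y) : ℂ))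
      = RCLike.re (a * (inner ℂ (T y) y : ℂ)) := by
    rw [← inner_conj_symm y (T y), ← map_mul]
    exact RCLike.conj_re _
  rw [e1, e2, e3]; ring

private lemma mobius_norm_lt {H : Type*} [NormedAddCommGroup H] [InnerProductSpace ℂ H]
    [CompleteSpace H] [Nontrivial H]
    (T : H →L[ℂ] H) (hT : ‖T‖ < 1) (a : ℂ) (ha : ‖a‖ < 1) :
    ‖(T - a • 1) * Ring.inverse (1 - (starRingEnd ℂ a) • T)‖ < 1 := by
  have hTn : (0:ℝ) ≤ ‖T‖ := norm_nonneg _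
  have han : (0:ℝ) ≤ ‖a‖ := norm_nonneg _
  have ht : ‖(starRingEnd ℂ a) • T‖ < 1 := by
    rw [norm_smul, RCLike.norm_conj]
    nlinarith
  set u : (H →L[ℂ] H)ˣ := Units.oneSub _ ht with hu
  have huval : (u : H →L[ℂ] H) = 1 - (starRingEnd ℂ a) • T := rfl
  have hinv : Ring.inverse (1 - (starRingEnd ℂ a) • T) = ((u⁻¹ : (H →L[ℂ] H)ˣ) : H →L[ℂ] H) := by
    rw [← huval, Ring.inverse_unit]
  set B : ℝ := ‖(1 : H →L[ℂ] H) - (starRingEnd ℂ a) • T‖ with hB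
  have hB1 : 1 - ‖a‖ * ‖T‖ ≤ B := by
    have h1 : ‖(1 : H →L[ℂ] H)‖ - ‖(starRingEnd ℂ a) • T‖ ≤ B := norm_sub_norm_le _ _
    rw [norm_one, norm_smul, RCLike.norm_conj] at h1
    exact h1
  have hBpos : 0 < B := by nlinarith
  set κ : ℝ := (1 - ‖a‖ ^ 2) * (1 - ‖T‖ ^ 2) with hκdef
  have ha2 : 0 < 1 - ‖a‖ ^ 2 := by nlinarith
  have hT2 : 0 < 1 - ‖T‖ ^ 2 := by nlinarith
  have hκ : 0 < κ := mul_pos ha2 hT2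
  set M : H →L[ℂ] H := (T - a • 1) * Ring.inverse (1 - (starRingEnd ℂ a) • T) with hM
  have claim : ∀ x : H, ‖M x‖ ^ 2 ≤ (1 - κ / B ^ 2) * ‖x‖ ^ 2 := by
    intro x
    set y : H := ((u⁻¹ : (H →L[ℂ] H)ˣ) : H →L[ℂ] H) x with hy
    have hxy : y - (starRingEnd ℂ a) • T y = x := by
      have h1 : ((u : H →L[ℂ] H) * ((u⁻¹ : (H →L[ℂ] H)ˣ) : H →L[ℂ] H)) x = x := by
        rw [u.mul_inv]; simp
      rw [ContinuousLinearMap.mul_apply, huval] at h1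
      simpa using h1
    have hMx : M x = T y - a • y := by
      rw [hM, ContinuousLinearMap.mul_apply, hinv, ← hy]
      simp [ContinuousLinearMap.sub_apply]
    have hxB : ‖x‖ ≤ B * ‖y‖ := by
      calc ‖x‖ = ‖((1 : H →L[ℂ] H) - (starRingEnd ℂ a) • T) y‖ := by
            rw [← hxy]; simp [ContinuousLinearMap.sub_apply]
        _ ≤ B * ‖y‖ := ContinuousLinearMap.le_opNorm _ _
    have hTy : ‖T y‖ ^ 2 ≤ ‖T‖ ^ 2 * ‖y‖ ^ 2 := by
      have := T.le_opNorm y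
      nlinarith [norm_nonneg (T y), norm_nonneg y]
    have hkey := inner_key T a y
    rw [hxy] at hkey
    have haux : κ * ‖y‖ ^ 2 ≤ (1 - ‖a‖ ^ 2) * (‖y‖ ^ 2 - ‖T y‖ ^ 2) := by
      have h9 : (0:ℝ) ≤ (1 - ‖a‖ ^ 2) * (‖T‖ ^ 2 * ‖y‖ ^ 2 - ‖T y‖ ^ 2) :=
        mul_nonneg (le_of_lt ha2) (by linarith)
      rw [hκdef]; nlinarith [h9]
    have h2 : ‖M x‖ ^ 2 ≤ ‖x‖ ^ 2 - κ * ‖y‖ ^ 2 := by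
      rw [hMx]
      nlinarith [haux, hkey]
    have hy2 : ‖x‖ ^ 2 ≤ B ^ 2 * ‖y‖ ^ 2 := by
      have := mul_self_le_mul_self (norm_nonneg x) hxB
      nlinarith [this]
    have hk3 : κ * ‖x‖ ^ 2 / B ^ 2 ≤ κ * ‖y‖ ^ 2 := by
      rw [div_le_iff₀ (by positivity)]
      nlinarith [mul_le_mul_of_nonneg_left hy2 (le_of_lt hκ)]
    calc ‖M x‖ ^ 2 ≤ ‖x‖ ^ 2 - κ * ‖y‖ ^ 2 := h2
      _ ≤ ‖x‖ ^ 2 - κ * ‖x‖ ^ 2 / B ^ 2 := by linarith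
      _ = (1 - κ / B ^ 2) * ‖x‖ ^ 2 := by ring
  have hnn : 0 ≤ 1 - κ / B ^ 2 := by
    obtain ⟨x₀, hx₀⟩ := exists_ne (0 : H)
    have h1 := claim x₀
    have h2 : 0 < ‖x₀‖ ^ 2 := by
      have := norm_pos_iff.mpr hx₀
      positivity
    nlinarith [sq_nonneg ‖M x₀‖]
  have hlt : 1 - κ / B ^ 2 < 1 := by
    have : 0 < κ / B ^ 2 := div_pos hκ (by positivity)
    linarith
  have hMle : ‖M‖ ≤ Real.sqrt (1 - κ / B ^ 2) := by
    apply ContinuousLinearMap.opNorm_le_bound _ (Real.sqrt_nonneg _)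
    intro x
    have h1 := claim x
    calc ‖M x‖ = Real.sqrt (‖M x‖ ^ 2) := by rw [Real.sqrt_sq (norm_nonneg _)]
      _ ≤ Real.sqrt ((1 - κ / B ^ 2) * ‖x‖ ^ 2) := Real.sqrt_le_sqrt h1
      _ = Real.sqrt (1 - κ / B ^ 2) * ‖x‖ := by
          rw [Real.sqrt_mul hnn, Real.sqrt_sq (norm_nonneg _)]
  have : Real.sqrt (1 - κ / B ^ 2) < 1 := by
    have h1' : Real.sqrt (1 - κ / B ^ 2) < Real.sqrt 1 := Real.sqrt_lt_sqrt hnn hlt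
    simpa using h1'
  calc ‖M‖ ≤ _ := hMle
    _ < 1 := this

private lemma first_coeff_bound {H : Type*} [NormedAddCommGroup H] [InnerProductSpace ℂ H]
    [CompleteSpace H]
    (d : ℕ → (H →L[ℂ] H)) (C : ℝ) (hC : ∀ m, ‖d m‖ ≤ C)
    (a₀ : ℂ) (ha₀ : ‖a₀‖ < 1) (hd0 : d 0 = a₀ • 1)
    (hg : ∀ ξ : ℂ, ‖ξ‖ < 1 → ∃ L, HasSum (fun m => ξ ^ m • d m) L ∧ ‖L‖ < 1) :
    ‖d 1‖ ≤ 1 - ‖a₀‖ ^ 2 := by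
  rcases subsingleton_or_nontrivial H with hsub | hnt
  · have h1 : d 1 = 0 := Subsingleton.elim _ _
    rw [h1, norm_zero]; nlinarith [norm_nonneg a₀]
  set q : FormalMultilinearSeries ℂ ℂ (H →L[ℂ] H) :=
    fun m => ContinuousMultilinearMap.mkPiRing ℂ (Fin m) (d m) with hq
  have hqnorm : ∀ m, ‖q m‖ = ‖d m‖ := fun m => ContinuousMultilinearMap.norm_mkPiRing _
  have hrad : (1 : ENNReal) ≤ q.radius := by
    have := FormalMultilinearSeries.le_radius_of_bound q C (r := 1) ?_
    · simpa using this
    · intro m; rw [hqnorm]; simpa using hC m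
  have hball : HasFPowerSeriesOnBall q.sum q 0 q.radius :=
    q.hasFPowerSeriesOnBall (lt_of_lt_of_le one_pos hrad)
  have hmem : ∀ ξ : ℂ, ‖ξ‖ < 1 → ξ ∈ Metric.eball (0:ℂ) q.radius := by
    intro ξ hξ
    rw [Metric.mem_eball, edist_zero_right]
    refine lt_of_lt_of_le ?_ hrad
    rw [enorm_eq_nnnorm]; exact_mod_cast hξ
  have hsum : ∀ ξ : ℂ, ‖ξ‖ < 1 → HasSum (fun m => ξ ^ m • d m) (q.sum ξ) := by
    intro ξ hξ
    have h1 := hball.hasSum (hmem ξ hξ)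
    have h2 : ∀ m, ((q m) fun _ => ξ) = ξ ^ m • d m := by
      intro m
      rw [hq]
      rw [ContinuousMultilinearMap.mkPiRing_apply]
      congr 1
      simp
    simpa [h2] using h1
  have hlt1 : ∀ ξ : ℂ, ‖ξ‖ < 1 → ‖q.sum ξ‖ < 1 := by
    intro ξ hξ
    obtain ⟨L, hL, hLn⟩ := hg ξ hξ
    rwa [(hsum ξ hξ).unique hL]
  have hg00 : q.sum 0 = a₀ • 1 := by
    have h0 : HasSum (fun m => (0:ℂ) ^ m • d m) ((0:ℂ) ^ 0 • d 0) :=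
      hasSum_single 0 (by intro m hm; simp [zero_pow hm])
    have h1 := (hsum 0 (by simp)).unique h0
    rw [h1, pow_zero, one_smul, hd0]
  have hdiff : DifferentiableOn ℂ q.sum (ball (0:ℂ) 1) :=
    hball.differentiableOn.mono fun z hz => hmem z (by simpa using mem_ball_zero_iff.mp hz)
  set M : ℂ → (H →L[ℂ] H) :=
    fun ξ => (q.sum ξ - a₀ • 1) * Ring.inverse (1 - (starRingEnd ℂ a₀) • q.sum ξ) with hM
  have hsmall : ∀ ξ : ℂ, ‖ξ‖ < 1 → ‖(starRingEnd ℂ a₀) • q.sum ξ‖ < 1 := by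
    intro ξ hξ
    rw [norm_smul, RCLike.norm_conj]
    nlinarith [hlt1 ξ hξ, norm_nonneg a₀, norm_nonneg (q.sum ξ)]
  have hunit : ∀ ξ : ℂ, ‖ξ‖ < 1 → IsUnit (1 - (starRingEnd ℂ a₀) • q.sum ξ) :=
    fun ξ hξ => isUnit_one_sub_of_norm_lt_one (hsmall ξ hξ)
  have hMdiff : DifferentiableOn ℂ M (ball (0:ℂ) 1) := by
    intro ξ hξ
    have hξ' : ‖ξ‖ < 1 := mem_ball_zero_iff.mp hξ
    have hqd : DifferentiableAt ℂ q.sum ξ := (hdiff.differentiableAt (isOpen_ball.mem_nhds hξ))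
    exact ((hqd.sub_const _).mul
      (((hqd.const_smul (starRingEnd ℂ a₀) : DifferentiableAt ℂ (fun ξ => (starRingEnd ℂ a₀) • q.sum ξ) ξ).const_sub 1).inverse (hunit ξ hξ'))).differentiableWithinAt
  have hM0 : M 0 = 0 := by
    rw [hM]
    simp only [hg00, sub_self, zero_mul]
  have hmaps : Set.MapsTo M (ball (0:ℂ) 1) (ball (M 0) 1) := by
    intro ξ hξ
    rw [hM0, mem_ball_zero_iff]
    exact mobius_norm_lt _ (hlt1 ξ (mem_ball_zero_iff.mp hξ)) a₀ ha₀
  have hschwarz : ‖deriv M 0‖ ≤ 1 := by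
    have := Complex.norm_deriv_le_div_of_mapsTo_ball hMdiff (hmaps.mono_right ball_subset_closedBall) one_pos
    simpa using this
  -- compute deriv M 0
  have hq0 : DifferentiableAt ℂ q.sum 0 :=
    hdiff.differentiableAt (isOpen_ball.mem_nhds (by simp))
  have hu : DifferentiableAt ℂ (fun ξ => q.sum ξ - a₀ • 1) 0 := hq0.sub_const _
  have hv : DifferentiableAt ℂ (fun ξ => Ring.inverse (1 - (starRingEnd ℂ a₀) • q.sum ξ)) 0 :=
    (((hq0.const_smul (starRingEnd ℂ a₀) : DifferentiableAt ℂ (fun ξ => (starRingEnd ℂ a₀) • q.sum ξ) 0)).const_sub 1).inverse (hunit 0 (by simp))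
  have hderivu : deriv (fun ξ => q.sum ξ - a₀ • 1) 0 = d 1 := by
    rw [deriv_sub_const]
    rw [hball.hasFPowerSeriesAt.deriv]
    rw [hq, ContinuousMultilinearMap.mkPiRing_apply]
    simp
  set c' : ℂ := 1 - (starRingEnd ℂ a₀) * a₀ with hc'
  have hc'eq : c' = ((1 - ‖a₀‖ ^ 2 : ℝ) : ℂ) := by
    rw [hc', mul_comm, Complex.mul_conj]
    rw [Complex.normSq_eq_norm_sq]
    push_cast
    ring
  have hc'ne : c' ≠ 0 := by
    rw [hc'eq]
    intro h
    rw [Complex.ofReal_eq_zero] at h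
    nlinarith [norm_nonneg a₀]
  have hv0 : Ring.inverse (1 - (starRingEnd ℂ a₀) • q.sum 0) = c'⁻¹ • (1 : H →L[ℂ] H) := by
    have h1 : (1 : H →L[ℂ] H) - (starRingEnd ℂ a₀) • q.sum 0 = c' • 1 := by
      rw [hg00, smul_smul, hc']
      rw [sub_smul, one_smul]
    rw [h1]
    set uu : (H →L[ℂ] H)ˣ :=
      { val := c' • 1, inv := c'⁻¹ • 1,
        val_inv := by rw [smul_mul_smul_comm, mul_inv_cancel₀ hc'ne, one_mul, one_smul],
        inv_val := by rw [smul_mul_smul_comm, inv_mul_cancel₀ hc'ne, one_mul, one_smul] } with huu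
    have : (c' • (1 : H →L[ℂ] H)) = (uu : H →L[ℂ] H) := rfl
    rw [this, Ring.inverse_unit]
    rfl
  have hderivM : deriv M 0 = c'⁻¹ • d 1 := by
    rw [hM]
    rw [deriv_fun_mul hu hv, hderivu, hv0]
    rw [hg00, sub_self, zero_mul, add_zero]
    rw [mul_smul_comm, mul_one]
  have hd1 : d 1 = c' • deriv M 0 := by
    rw [hderivM, smul_smul, mul_inv_cancel₀ hc'ne, one_smul]
  have hnc' : ‖c'‖ = 1 - ‖a₀‖ ^ 2 := by
    rw [hc'eq, Complex.norm_real, Real.norm_eq_abs]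
    rw [abs_of_nonneg (by nlinarith [norm_nonneg a₀])]
  calc ‖d 1‖ = ‖c'‖ * ‖deriv M 0‖ := by rw [hd1, norm_smul]
    _ ≤ ‖c'‖ * 1 := by
        apply mul_le_mul_of_nonneg_left hschwarz (norm_nonneg _)
    _ = 1 - ‖a₀‖ ^ 2 := by rw [mul_one, hnc']

private lemma coeff_bound {H : Type*} [NormedAddCommGroup H] [InnerProductSpace ℂ H]
    [CompleteSpace H]
    (c : ℕ → (H →L[ℂ] H)) (C : ℝ) (hC : ∀ m, ‖c m‖ ≤ C)
    (a₀ : ℂ) (ha₀ : ‖a₀‖ < 1) (hc0 : c 0 = a₀ • 1)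
    (hg : ∀ ξ : ℂ, ‖ξ‖ < 1 → ∃ L, HasSum (fun m => ξ ^ m • c m) L ∧ ‖L‖ < 1)
    (k : ℕ) (hk : 1 ≤ k) :
    ‖c k‖ ≤ 1 - ‖a₀‖ ^ 2 := by
  have hk0 : k ≠ 0 := by omega
  have hkc : ((k:ℂ)) ≠ 0 := Nat.cast_ne_zero.mpr hk0
  set d : ℕ → (H →L[ℂ] H) := fun m => c (m * k) with hd
  have h1 : ‖d 1‖ ≤ 1 - ‖a₀‖ ^ 2 := by
    apply first_coeff_bound d C (fun m => hC _) a₀ ha₀ (by rw [hd]; simpa using hc0)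
    intro η hη
    obtain ⟨ζ, hζ⟩ := IsAlgClosed.exists_pow_nat_eq η (n := k) (by omega)
    have hζn : ‖ζ‖ < 1 := by
      by_contra h
      push_neg at h
      have h2 : (1:ℝ) ≤ ‖ζ‖ ^ k := one_le_pow₀ h
      rw [← hζ, norm_pow] at hη
      linarith
    set ω : ℂ := Complex.exp (2 * Real.pi * Complex.I / k) with hω
    have hprim : IsPrimitiveRoot ω k := Complex.isPrimitiveRoot_exp k hk0
    have hωn : ‖ω‖ = 1 := by
      have he : ω = Complex.exp ((2 * Real.pi / k : ℝ) * Complex.I) := by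
        rw [hω]; push_cast; ring_nf
      rw [he, Complex.norm_exp_ofReal_mul_I]
    have hterm : ∀ j : ℕ, ‖ω ^ j * ζ‖ < 1 := fun j => by
      rw [norm_mul, norm_pow, hωn, one_pow, one_mul]; exact hζn
    choose L hL hLn using fun j : ℕ => hg (ω ^ j * ζ) (hterm j)
    have hsum1 : HasSum (fun m => ∑ j ∈ Finset.range k, (ω ^ j * ζ) ^ m • c m)
        (∑ j ∈ Finset.range k, L j) := hasSum_sum (fun j _ => hL j)
    have hterm2 : ∀ m, (∑ j ∈ Finset.range k, (ω ^ j * ζ) ^ m • c m)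
        = (if k ∣ m then ((k:ℂ) * ζ ^ m) • c m else 0) := by
      intro m
      have hpj : ∀ j, (ω ^ j * ζ) ^ m = (ω ^ m) ^ j * ζ ^ m := by
        intro j; rw [mul_pow, pow_right_comm]
      simp_rw [hpj]
      rw [← Finset.sum_smul, ← Finset.sum_mul]
      by_cases hdvd : k ∣ m
      · rw [if_pos hdvd]
        have : ω ^ m = 1 := (hprim.pow_eq_one_iff_dvd m).mpr hdvd
        simp [this]
      · rw [if_neg hdvd]
        have hne : ω ^ m ≠ 1 := fun h => hdvd ((hprim.pow_eq_one_iff_dvd m).mp h)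
        have hωk : (ω ^ m) ^ k = 1 := by
          rw [pow_right_comm, hprim.pow_eq_one, one_pow]
        rw [geom_sum_eq hne, hωk, sub_self, zero_div, zero_mul, zero_smul]
    rw [funext hterm2] at hsum1
    have hsum2 : HasSum (fun m => if k ∣ m then ζ ^ m • c m else 0)
        ((k:ℂ)⁻¹ • ∑ j ∈ Finset.range k, L j) := by
      have h3 := hsum1.const_smul ((k:ℂ)⁻¹)
      have h4 : (fun m => (k:ℂ)⁻¹ • (if k ∣ m then ((k:ℂ) * ζ ^ m) • c m else 0))
          = fun m => if k ∣ m then ζ ^ m • c m else 0 := by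
        funext m
        by_cases hdvd : k ∣ m
        · rw [if_pos hdvd, if_pos hdvd, smul_smul, inv_mul_cancel_left₀ hkc]
        · rw [if_neg hdvd, if_neg hdvd, smul_zero]
      rwa [h4] at h3
    have hinj : Function.Injective (fun q : ℕ => q * k) := fun a b h => by
      simpa [Nat.mul_left_cancel_iff, hk0] using Nat.eq_of_mul_eq_mul_right (by omega) h
    have hvan : ∀ m ∉ Set.range (fun q : ℕ => q * k),
        (if k ∣ m then ζ ^ m • c m else 0) = 0 := by
      intro m hm
      rw [if_neg]
      intro hdvd
      obtain ⟨q, hq⟩ := hdvd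
      exact hm ⟨q, by rw [hq, Nat.mul_comm]⟩
    have hsum3 := (hinj.hasSum_iff hvan).mpr hsum2
    have hfun : ((fun m => if k ∣ m then ζ ^ m • c m else 0) ∘ fun q : ℕ => q * k)
        = fun q => η ^ q • d q := by
      funext q
      simp only [Function.comp_apply]
      rw [if_pos (dvd_mul_left k q), ← hζ, ← pow_mul, hd]
      simp [Nat.mul_comm]
    rw [hfun] at hsum3
    refine ⟨_, hsum3, ?_⟩
    rw [norm_smul, norm_inv, Complex.norm_natCast]
    have hsumlt : ‖∑ j ∈ Finset.range k, L j‖ < k := by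
      calc ‖∑ j ∈ Finset.range k, L j‖ ≤ ∑ j ∈ Finset.range k, ‖L j‖ := norm_sum_le _ _
        _ < ∑ _j ∈ Finset.range k, 1 :=
            Finset.sum_lt_sum_of_nonempty (Finset.nonempty_range_iff.mpr hk0)
              (fun j _ => hLn j)
        _ = k := by simp
    have hkpos : (0:ℝ) < k := by exact_mod_cast Nat.pos_of_ne_zero hk0
    calc ((k:ℝ))⁻¹ * ‖∑ j ∈ Finset.range k, L j‖ < ((k:ℝ))⁻¹ * k :=
          mul_lt_mul_of_pos_left hsumlt (by positivity)
      _ = 1 := inv_mul_cancel₀ (ne_of_gt hkpos)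
  rw [hd] at h1
  simpa using h1

/-- Multidimensional improved operator valued Bohr inequality (monomial case):
on a complete circular domain `Q`, if `f = ∑ₖ Pₖ` with `‖f‖ < 1`, `f(0) = a₀ I`,
`|a₀| < 1`, and `∑ₖ k‖Pₖ(z)‖²` converges on `Q`, then for `r ∈ [0,1/3]` and
`w ∈ Q`, the point `z = r·w` satisfies `∑ₖ ‖Pₖ(z)‖ + (8/9)∑ₖ k‖Pₖ(z)‖² ≤ 1`. -/
theorem bohr_multidim_improved_monomial
    {H : Type*} [NormedAddCommGroup H] [InnerProductSpace ℂ H] [CompleteSpace H]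
    {n : ℕ} (Q : Set (Fin n → ℂ))
    (hQopen : IsOpen Q) (hQconn : IsConnected Q) (hQ0 : (0 : Fin n → ℂ) ∈ Q)
    (hQcirc : ∀ z ∈ Q, ∀ ξ : ℂ, ‖ξ‖ ≤ 1 → ξ • z ∈ Q)
    (f : (Fin n → ℂ) → (H →L[ℂ] H))
    (P : ℕ → (Fin n → ℂ) → (H →L[ℂ] H))
    (A : (Fin n → ℕ) → (H →L[ℂ] H))
    (hP : ∀ (k : ℕ) (z : Fin n → ℂ),
      HasSum (fun α : {α : Fin n → ℕ // ∑ i, α i = k} =>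
        (∏ i, z i ^ α.1 i) • A α.1) (P k z))
    (hexp : ∀ z ∈ Q, HasSum (fun k => P k z) (f z))
    (hlt : ∀ z ∈ Q, ‖f z‖ < 1)
    (a₀ : ℂ) (ha₀ : ‖a₀‖ < 1)
    (hf0 : f 0 = a₀ • (1 : H →L[ℂ] H))
    (hS : ∀ z ∈ Q, Summable (fun k : ℕ => (k : ℝ) * ‖P k z‖ ^ 2))
    (w : Fin n → ℂ) (hw : w ∈ Q)
    (r : ℝ) (hr0 : 0 ≤ r) (hr : r ≤ 1 / 3) :
    Summable (fun k => ‖P k ((r : ℂ) • w)‖) ∧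
    Summable (fun k : ℕ => (k : ℝ) * ‖P k ((r : ℂ) • w)‖ ^ 2) ∧
    ∑' k, ‖P k ((r : ℂ) • w)‖ +
        (8 / 9 : ℝ) * ∑' k : ℕ, (k : ℝ) * ‖P k ((r : ℂ) • w)‖ ^ 2 ≤ 1 := by
  -- homogeneity of each P k
  have hom : ∀ (k : ℕ) (ξ : ℂ) (z : Fin n → ℂ), P k (ξ • z) = ξ ^ k • P k z := by
    intro k ξ z
    have h1 := hP k (ξ • z)
    have h2 := (hP k z).const_smul (ξ ^ k)
    have h3 : (fun α : {α : Fin n → ℕ // ∑ i, α i = k} =>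
        (∏ i, (ξ • z) i ^ α.1 i) • A α.1)
        = fun α => ξ ^ k • ((∏ i, z i ^ α.1 i) • A α.1) := by
      funext α
      have h4 : (∏ i, (ξ • z) i ^ α.1 i) = ξ ^ k * ∏ i, z i ^ α.1 i := by
        calc (∏ i, (ξ • z) i ^ α.1 i) = ∏ i, (ξ ^ α.1 i * z i ^ α.1 i) := by
              simp [mul_pow]
          _ = (∏ i, ξ ^ α.1 i) * ∏ i, z i ^ α.1 i := Finset.prod_mul_distrib
          _ = ξ ^ k * ∏ i, z i ^ α.1 i := by
              rw [Finset.prod_pow_eq_pow_sum, α.2]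
      rw [h4, mul_smul]
    rw [h3] at h1
    exact h1.unique h2
  set c : ℕ → (H →L[ℂ] H) := fun k => P k w with hcdef
  have hc : ∀ ξ : ℂ, ‖ξ‖ ≤ 1 → HasSum (fun k => ξ ^ k • c k) (f (ξ • w)) := by
    intro ξ hξ
    have h1 := hexp (ξ • w) (hQcirc w hw ξ hξ)
    simpa only [hom] using h1
  have hflt : ∀ ξ : ℂ, ‖ξ‖ ≤ 1 → ‖f (ξ • w)‖ < 1 := fun ξ hξ => hlt _ (hQcirc w hw ξ hξ)
  obtain ⟨C, hC⟩ : ∃ C, ∀ m, ‖c m‖ ≤ C := by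
    have h1 : HasSum c (f ((1:ℂ) • w)) := by
      have := hc 1 (by simp)
      simpa using this
    have h2 : Filter.Tendsto (fun m => ‖c m‖) Filter.atTop (nhds 0) := by
      have := h1.summable.tendsto_atTop_zero.norm
      simpa using this
    obtain ⟨C, hC⟩ := h2.bddAbove_range
    exact ⟨C, fun m => hC ⟨m, rfl⟩⟩
  have hc0 : c 0 = a₀ • 1 := by
    have h1 := hc 0 (by simp)
    rw [zero_smul] at h1
    have h0 : HasSum (fun m => (0:ℂ) ^ m • c m) ((0:ℂ) ^ 0 • c 0) :=
      hasSum_single 0 (by intro m hm; simp [zero_pow hm])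
    have h2 := h1.unique h0
    rw [hf0] at h2
    simpa using h2.symm
  have hck : ∀ k, 1 ≤ k → ‖c k‖ ≤ 1 - ‖a₀‖ ^ 2 := by
    intro k hk
    exact coeff_bound c C hC a₀ ha₀ hc0
      (fun ξ hξ => ⟨f (ξ • w), hc ξ (le_of_lt hξ), hflt ξ (le_of_lt hξ)⟩) k hk
  have hone : ‖(1 : H →L[ℂ] H)‖ ≤ 1 := by
    rw [ContinuousLinearMap.one_def]
    exact ContinuousLinearMap.norm_id_le
  set t : ℝ := ‖a₀‖ with htdef
  have ht0 : 0 ≤ t := norm_nonneg _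
  have ht1 : t < 1 := ha₀
  have hu0 : 0 ≤ 1 - t ^ 2 := by nlinarith
  have hc0n : ‖c 0‖ ≤ t := by
    rw [hc0, norm_smul]
    nlinarith [norm_nonneg a₀]
  have hPr : ∀ k : ℕ, ‖P k ((r : ℂ) • w)‖ = r ^ k * ‖c k‖ := by
    intro k
    rw [show P k ((r : ℂ) • w) = ((r:ℂ)) ^ k • c k from hom k _ w, norm_smul, norm_pow,
      Complex.norm_real, Real.norm_eq_abs, abs_of_nonneg hr0]
  have hr1 : r < 1 := lt_of_le_of_lt hr (by norm_num)
  have hr2 : r ^ 2 < 1 := by nlinarith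
  have hr2' : 0 ≤ r ^ 2 := by positivity
  -- summability
  set D : ℝ := max t (1 - t ^ 2) with hDdef
  have hs1 : Summable (fun k => ‖P k ((r : ℂ) • w)‖) := by
    have hle : ∀ k : ℕ, ‖P k ((r : ℂ) • w)‖ ≤ D * r ^ k := by
      intro k
      rw [hPr]
      rcases Nat.eq_zero_or_pos k with rfl | hk
      · simp only [pow_zero, one_mul, mul_one]
        exact le_trans hc0n (le_max_left _ _)
      · have h1 : ‖c k‖ ≤ D := le_trans (hck k hk) (le_max_right _ _)
        have h2 : (0:ℝ) ≤ r ^ k := by positivity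
        calc r ^ k * ‖c k‖ ≤ r ^ k * D := mul_le_mul_of_nonneg_left h1 h2
          _ = D * r ^ k := mul_comm _ _
    exact Summable.of_nonneg_of_le (fun k => norm_nonneg _) hle
      ((summable_geometric_of_lt_one hr0 hr1).mul_left _)
  have hgeom2 : Summable (fun k : ℕ => (k : ℝ) * (r ^ 2) ^ k) := by
    have := summable_pow_mul_geometric_of_norm_lt_one (R := ℝ) 1
      (r := r ^ 2) (by rw [Real.norm_eq_abs, abs_of_nonneg hr2']; exact hr2)
    simpa using this
  have hbound2 : ∀ k : ℕ, (k : ℝ) * ‖P k ((r : ℂ) • w)‖ ^ 2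
      ≤ (1 - t ^ 2) ^ 2 * ((k : ℝ) * (r ^ 2) ^ k) := by
    intro k
    rcases Nat.eq_zero_or_pos k with rfl | hk
    · simp
    · rw [hPr]
      have h1 : ‖c k‖ ≤ 1 - t ^ 2 := hck k hk
      have h2 : (0:ℝ) ≤ r ^ k := by positivity
      have h3 : (r ^ k * ‖c k‖) ^ 2 ≤ (1 - t ^ 2) ^ 2 * (r ^ 2) ^ k := by
        have h4 : (r ^ 2) ^ k = (r ^ k) ^ 2 := by rw [← pow_mul, ← pow_mul, Nat.mul_comm]
        rw [h4]
        have h5 : ‖c k‖ * ‖c k‖ ≤ (1 - t ^ 2) * (1 - t ^ 2) :=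
          mul_self_le_mul_self (norm_nonneg _) h1
        nlinarith [mul_le_mul_of_nonneg_left h5 (sq_nonneg (r ^ k))]
      calc (k : ℝ) * (r ^ k * ‖c k‖) ^ 2 ≤ (k : ℝ) * ((1 - t ^ 2) ^ 2 * (r ^ 2) ^ k) :=
            mul_le_mul_of_nonneg_left h3 (Nat.cast_nonneg k)
        _ = (1 - t ^ 2) ^ 2 * ((k : ℝ) * (r ^ 2) ^ k) := by ring
  have hs2 : Summable (fun k : ℕ => (k : ℝ) * ‖P k ((r : ℂ) • w)‖ ^ 2) := by
    exact Summable.of_nonneg_of_le (fun k => by positivity) hbound2 (hgeom2.mul_left _)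
  refine ⟨hs1, hs2, ?_⟩
  -- bound the first sum
  have htail : Summable (fun k => ‖P (k + 1) ((r : ℂ) • w)‖) :=
    (summable_nat_add_iff 1).mpr hs1
  have htailg : Summable (fun k : ℕ => ((1 - t ^ 2) * r) * r ^ k) :=
    (summable_geometric_of_lt_one hr0 hr1).mul_left _
  have hS1 : ∑' k, ‖P k ((r : ℂ) • w)‖ ≤ t + (1 - t ^ 2) * (1 / 2) := by
    rw [hs1.tsum_eq_zero_add]
    have h0 : ‖P 0 ((r : ℂ) • w)‖ ≤ t := by
      rw [hPr 0, pow_zero, one_mul]; exact hc0n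
    have htb : ∑' k, ‖P (k + 1) ((r : ℂ) • w)‖ ≤ ∑' k : ℕ, ((1 - t ^ 2) * r) * r ^ k := by
      apply Summable.tsum_le_tsum _ htail htailg
      intro k
      rw [hPr]
      have h1 : ‖c (k + 1)‖ ≤ 1 - t ^ 2 := hck (k + 1) (by omega)
      have h2 : (0:ℝ) ≤ r ^ (k + 1) := by positivity
      calc r ^ (k + 1) * ‖c (k + 1)‖ ≤ r ^ (k + 1) * (1 - t ^ 2) :=
            mul_le_mul_of_nonneg_left h1 h2
        _ = ((1 - t ^ 2) * r) * r ^ k := by ring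
    have hgeo : ∑' k : ℕ, ((1 - t ^ 2) * r) * r ^ k = ((1 - t ^ 2) * r) * (1 - r)⁻¹ := by
      rw [tsum_mul_left, tsum_geometric_of_lt_one hr0 hr1]
    have hhalf : r * (1 - r)⁻¹ ≤ 1 / 2 := by
      have h1r : 0 < 1 - r := by linarith
      rw [← div_eq_mul_inv, div_le_iff₀ h1r]
      linarith
    have : ((1 - t ^ 2) * r) * (1 - r)⁻¹ ≤ (1 - t ^ 2) * (1 / 2) := by
      rw [mul_assoc]
      exact mul_le_mul_of_nonneg_left hhalf hu0
    linarith [htb, hgeo.le, hgeo.ge, h0]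
  -- bound the second sum
  have hS2 : ∑' k : ℕ, (k : ℝ) * ‖P k ((r : ℂ) • w)‖ ^ 2
      ≤ (1 - t ^ 2) ^ 2 * (9 / 64) := by
    have htb : ∑' k : ℕ, (k : ℝ) * ‖P k ((r : ℂ) • w)‖ ^ 2
        ≤ ∑' k : ℕ, (1 - t ^ 2) ^ 2 * ((k : ℝ) * (r ^ 2) ^ k) :=
      Summable.tsum_le_tsum hbound2 hs2 (hgeom2.mul_left _)
    have hgeo : ∑' k : ℕ, (1 - t ^ 2) ^ 2 * ((k : ℝ) * (r ^ 2) ^ k)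
        = (1 - t ^ 2) ^ 2 * (r ^ 2 / (1 - r ^ 2) ^ 2) := by
      rw [tsum_mul_left]
      congr 1
      have := tsum_coe_mul_geometric_of_norm_lt_one (𝕜 := ℝ) (r := r ^ 2)
        (by rw [Real.norm_eq_abs, abs_of_nonneg hr2']; exact hr2)
      simpa using this
    have hfrac : r ^ 2 / (1 - r ^ 2) ^ 2 ≤ 9 / 64 := by
      have h1 : 0 < (1 - r ^ 2) ^ 2 := by nlinarith
      rw [div_le_div_iff₀ h1 (by norm_num : (0:ℝ) < 64)]
      have hs19 : r ^ 2 ≤ 1 / 9 := by nlinarith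
      nlinarith [mul_nonneg (by linarith : (0:ℝ) ≤ 1 - 9 * r ^ 2)
        (by nlinarith : (0:ℝ) ≤ 9 - r ^ 2)]
    have := mul_le_mul_of_nonneg_left hfrac (sq_nonneg (1 - t ^ 2))
    linarith [htb, hgeo.le]
  -- final numeric inequality
  have hkey : t + (1 - t ^ 2) * (1 / 2) + (8 / 9) * ((1 - t ^ 2) ^ 2 * (9 / 64)) ≤ 1 := by
    have h1 : (0:ℝ) ≤ 1 - t := by linarith
    have h2 : (0:ℝ) ≤ ((1 - t) * (1 - t) * (1 - t)) * (t + 3) :=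
      mul_nonneg (mul_nonneg (mul_nonneg h1 h1) h1) (by linarith)
    nlinarith [h2]
  have h82 : (8 / 9 : ℝ) * ∑' k : ℕ, (k : ℝ) * ‖P k ((r : ℂ) • w)‖ ^ 2
      ≤ (8 / 9) * ((1 - t ^ 2) ^ 2 * (9 / 64)) :=
    mul_le_mul_of_nonneg_left hS2 (by norm_num)
  linarith [hS1, h82, hkey]
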